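/- For every integer m ≥ 1, lim_{b→∞} (2b)^m e^{b²} I_m(−b) = 1; equivalently, e^{α²} I_m(α) ∼ (−2α)^{−m} as α → −∞. -/

import Mathlib

/-!
Formalization of statements from "The strong interaction limit of
continuous-time weakly self-avoiding walk" by Brydges, Dahlqvist, Slade.

An `n`-step nearest-neighbour walk on `ℤ^d` starting at the origin is encoded
bijectively by its sequence of steps `s : Fin n → Fin d × Bool`, a step being a
coordinate direction together with a sign.
-/

open scoped BigOperators Topology
open Filter

namespace StrongInteraction

/-- The unit step in coordinate direction `e.1`, with sign `e.2`. -/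
def stepVec (d : ℕ) (e : Fin d × Bool) : Fin d → ℤ :=
  fun i => if i = e.1 then (if e.2 then 1 else -1) else 0

/-- `walkPos s k` is the position `Y_k` of the walk started at the origin whose
successive nearest-neighbour steps are given by `s`. -/
def walkPos {d n : ℕ} (s : Fin n → Fin d × Bool) (k : Fin (n + 1)) : Fin d → ℤ :=
  ∑ i ∈ Finset.univ.filter (fun i : Fin n => (i : ℕ) < (k : ℕ)), stepVec d (s i)

/-- `n_x(Y)`: the number of visits to `x` by the walk. -/
def visits {d n : ℕ} (s : Fin n → Fin d × Bool) (x : Fin d → ℤ) : ℕ :=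
  (Finset.univ.filter (fun k : Fin (n + 1) => walkPos s k = x)).card

/-- The set of distinct vertices visited by the walk. -/
def walkRange {d n : ℕ} (s : Fin n → Fin d × Bool) : Finset (Fin d → ℤ) :=
  Finset.image (walkPos s) Finset.univ

/-- A walk is self-avoiding when its positions are pairwise distinct. -/
def SelfAvoiding {d n : ℕ} (s : Fin n → Fin d × Bool) : Prop :=
  Function.Injective (walkPos s)

instance {d n : ℕ} (s : Fin n → Fin d × Bool) : Decidable (SelfAvoiding s) :=
  inferInstanceAs (Decidable (Function.Injective (walkPos s)))

/-- `c_n`: the number of `n`-step self-avoiding walks. -/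
def csaw (d n : ℕ) : ℕ :=
  (Finset.univ.filter fun s : Fin n → Fin d × Bool => SelfAvoiding s).card


/-- `I_m(a) = ∫_{-a}^∞ ((a+u)^{m-1}/(m-1)!) e^{-u²} du`. -/
noncomputable def Ifun (a : ℝ) (m : ℕ) : ℝ :=
  ∫ u in Set.Ioi (-a), ((a + u) ^ (m - 1) / (Nat.factorial (m - 1))) * Real.exp (-u ^ 2)


open MeasureTheory Set in
private lemma Ifun_key (m : ℕ) (hm : 1 ≤ m) (b : ℝ) (hb : 0 < b) :
    (2 * b) ^ m * Real.exp (b ^ 2) * Ifun (-b) m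
      = ∫ s in Ioi (0:ℝ), s ^ (m-1) / (Nat.factorial (m-1)) * Real.exp (-s - s^2/(4*b^2)) := by
  have h2b : (0:ℝ) < 2 * b := by linarith
  have htrans : Ifun (-b) m
      = ∫ t in Ioi (0:ℝ), (t ^ (m-1) / (Nat.factorial (m-1))) * Real.exp (-(t+b)^2) := by
    rw [Ifun, neg_neg]
    rw [← (measurePreserving_add_right volume b).setIntegral_preimage_emb
      (MeasurableEquiv.addRight b).measurableEmbedding
      (fun u => ((-b + u) ^ (m - 1) / (Nat.factorial (m - 1))) * Real.exp (-u ^ 2)) (Ioi b)]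
    rw [show ((fun x => x + b) ⁻¹' Ioi b) = Ioi 0 by rw [preimage_add_const_Ioi, sub_self]]
    refine setIntegral_congr_fun measurableSet_Ioi (fun t ht => ?_)
    rw [show -b + (t + b) = t by ring]
  rw [htrans]
  have hscale := integral_comp_mul_left_Ioi
    (fun s => (s/(2*b)) ^ (m-1) / (Nat.factorial (m-1)) * Real.exp (-(s/(2*b)+b)^2)) 0 h2b
  simp only [mul_zero] at hscale
  have h1 : (∫ t in Ioi (0:ℝ), (t ^ (m-1) / (Nat.factorial (m-1))) * Real.exp (-(t+b)^2))
      = ∫ x in Ioi (0:ℝ), (2*b*x/(2*b)) ^ (m-1) / (Nat.factorial (m-1)) * Real.exp (-(2*b*x/(2*b)+b)^2) := by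
    refine setIntegral_congr_fun measurableSet_Ioi (fun t ht => ?_)
    rw [mul_div_cancel_left₀ _ h2b.ne']
  rw [h1, hscale, smul_eq_mul, ← mul_assoc, ← MeasureTheory.integral_const_mul]
  refine setIntegral_congr_fun measurableSet_Ioi (fun s hs => ?_)
  have hexp : -s - s ^ 2 / (4 * b ^ 2) = b ^ 2 + -(s / (2 * b) + b) ^ 2 := by
    field_simp; ring
  rw [hexp, Real.exp_add, div_pow]
  have hpow : (2*b) ^ m = (2*b) * (2*b)^(m-1) := by
    rw [← pow_succ']; congr 1; omega
  rw [hpow]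
  have hne : ((2:ℝ)*b)^(m-1) ≠ 0 := pow_ne_zero _ h2b.ne'
  have hfac : ((Nat.factorial (m-1)):ℝ) ≠ 0 := Nat.cast_ne_zero.mpr (Nat.factorial_ne_zero _)
  field_simp

open MeasureTheory Set in
private lemma Ifun_lim (m : ℕ) (hm : 1 ≤ m) :
    Tendsto (fun b : ℝ => ∫ s in Ioi (0:ℝ),
        s ^ (m-1) / (Nat.factorial (m-1)) * Real.exp (-s - s^2/(4*b^2))) atTop
      (𝓝 1) := by
  have hfac : ((Nat.factorial (m-1)):ℝ) ≠ 0 := Nat.cast_ne_zero.mpr (Nat.factorial_ne_zero _)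
  set g : ℝ → ℝ := fun s => s ^ (m-1) / (Nat.factorial (m-1)) * Real.exp (-s) with hg
  have hgint : IntegrableOn g (Ioi 0) := by
    have h := Real.GammaIntegral_convergent (s := (m:ℝ)) (by exact_mod_cast hm.trans_lt' Nat.zero_lt_one)
    have h2 : IntegrableOn (fun x : ℝ => Real.exp (-x) * x ^ ((m:ℝ) - 1)) (Ioi 0) := h
    have h3 : IntegrableOn (fun x : ℝ => ((Nat.factorial (m-1)):ℝ)⁻¹ * (Real.exp (-x) * x ^ ((m:ℝ) - 1))) (Ioi 0) :=
      h2.const_mul _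
    refine h3.congr_fun (fun x hx => ?_) measurableSet_Ioi
    have : x ^ ((m:ℝ) - 1) = x ^ (m-1 : ℕ) := by
      rw [← Real.rpow_natCast x (m-1)]
      congr 1
      push_cast [Nat.cast_sub hm]
      ring
    beta_reduce; rw [this]; ring
  have hgval : ∫ s in Ioi (0:ℝ), g s = 1 := by
    have h := Real.Gamma_eq_integral (s := (m:ℝ)) (by exact_mod_cast hm.trans_lt' Nat.zero_lt_one)
    have hG : Real.Gamma (m:ℝ) = Nat.factorial (m-1) := by
      rw [show ((m:ℝ)) = ((m-1 : ℕ) : ℝ) + 1 by push_cast [Nat.cast_sub hm]; ring,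
        Real.Gamma_nat_eq_factorial]
    have : ∫ s in Ioi (0:ℝ), g s
        = ((Nat.factorial (m-1)):ℝ)⁻¹ * ∫ x in Ioi (0:ℝ), Real.exp (-x) * x ^ ((m:ℝ) - 1) := by
      rw [← MeasureTheory.integral_const_mul]
      refine setIntegral_congr_fun measurableSet_Ioi (fun x hx => ?_)
      have : x ^ ((m:ℝ) - 1) = x ^ (m-1 : ℕ) := by
        rw [← Real.rpow_natCast x (m-1)]
        congr 1
        push_cast [Nat.cast_sub hm]
        ring
      rw [this, hg]; ring
    rw [this, ← h, hG, inv_mul_cancel₀ hfac]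
  rw [show (1:ℝ) = ∫ s in Ioi (0:ℝ), g s from hgval.symm]
  refine tendsto_integral_filter_of_dominated_convergence g ?_ ?_ hgint ?_
  · filter_upwards with b
    apply Continuous.aestronglyMeasurable
    continuity
  · filter_upwards with b
    filter_upwards [ae_restrict_mem measurableSet_Ioi] with s hs
    have hs' : (0:ℝ) < s := hs
    have h1 : 0 ≤ s ^ (m-1) / ((Nat.factorial (m-1)):ℝ) :=
      div_nonneg (pow_nonneg hs'.le _) (Nat.cast_nonneg _)
    rw [Real.norm_eq_abs, abs_of_nonneg (mul_nonneg h1 (Real.exp_nonneg _))]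
    refine mul_le_mul_of_nonneg_left ?_ h1
    apply Real.exp_le_exp.2
    have : 0 ≤ s^2 / (4*b^2) := by positivity
    linarith
  · filter_upwards [ae_restrict_mem measurableSet_Ioi] with s hs
    have h1 : Tendsto (fun b : ℝ => -s - s^2/(4*b^2)) atTop (𝓝 (-s)) := by
      have h2 : Tendsto (fun b : ℝ => s^2/(4*b^2)) atTop (𝓝 0) := by
        have := (tendsto_pow_atTop (n := 2) two_ne_zero).const_mul_atTop (show (0:ℝ) < 4 by norm_num)
        have h3 := Tendsto.div_atTop (tendsto_const_nhds (x := s^2)) this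
        simpa using h3
      have := (tendsto_const_nhds (x := -s)).sub h2
      simpa using this
    simpa using ((Real.continuous_exp.tendsto _).comp h1).const_mul (s ^ (m-1) / (Nat.factorial (m-1)))

/-- `(2b)^m e^{b²} I_m(-b) → 1` as `b → ∞`, i.e.
`e^{α²} I_m(α) ∼ (-2α)^{-m}` as `α → -∞`. -/
theorem I_asymptotics_at_bot (m : ℕ) (hm : 1 ≤ m) :
    Tendsto (fun b : ℝ => (2 * b) ^ m * Real.exp (b ^ 2) * Ifun (-b) m) atTop (𝓝 1) := by
  refine (Ifun_lim m hm).congr' ?_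
  filter_upwards [eventually_gt_atTop (0:ℝ)] with b hb
  exact (Ifun_key m hm b hb).symm

end StrongInteraction
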